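/- arXiv:0911.0163 — 2 statements merged into one kernel-verified Lean document; each statement's English description precedes it below -/
import Mathlib

section
/- Let X be a real Banach space and let Q, Π : X →L X be bounded linear operators with Π ∘ Π = Π and Π ∘ Q = Q ∘ Π = 0. Let g : [0,∞) → X be continuous and Bochner integrable, and let w₀ ∈ X. Define w(τ) := (e^{τQ} − Π) w₀ + ∫₀^τ (e^{(τ−s)Q} − Π) g(s) ds − Π ( ∫_τ^∞ g(s) ds ) for τ ≥ 0. Then w is differentiable on (0,∞) with w'(τ) = Q (w(τ)) + g(τ); i.e. the corrected singular-term formula solves the boundary-layer equation dw/dτ − Q w = g. -/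
open NormedSpace MeasureTheory

set_option maxHeartbeats 1000000
set_option synthInstance.maxHeartbeats 400000

/-- The corrected singular-term formula
`w(τ) = (e^{τQ} − P) w₀ + ∫₀^τ (e^{(τ−s)Q} − P) g(s) ds − P(∫_τ^∞ g(s) ds)`
solves the boundary-layer equation `dw/dτ = Q w + g` on `(0,∞)`. -/
theorem singular_term_solves_boundary_layer
    {X : Type*} [NormedAddCommGroup X] [NormedSpace ℝ X] [CompleteSpace X]
    (Q P : X →L[ℝ] X)
    (hPP : P ∘L P = P) (hPQ : P ∘L Q = 0) (hQP : Q ∘L P = 0)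
    (g : ℝ → X) (hg_cont : ContinuousOn g (Set.Ici 0))
    (hg_int : IntegrableOn g (Set.Ici 0) volume)
    (w₀ : X) (w : ℝ → X)
    (hw : ∀ τ : ℝ, w τ = (exp (τ • Q) - P) w₀
        + (∫ s in (0:ℝ)..τ, (exp ((τ - s) • Q) - P) (g s))
        - P (∫ s in Set.Ici τ, g s)) :
    ∀ τ : ℝ, 0 < τ → HasDerivAt w (Q (w τ) + g τ) τ := by
  intro τ hτ
  let +nondep : NormedAlgebra ℚ (X →L[ℝ] X) := .restrictScalars ℚ ℝ (X →L[ℝ] X)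
  set E : ℝ → X →L[ℝ] X := fun t => exp (t • Q) with hEdef
  -- semigroup property
  have hmul : ∀ t s : ℝ, E (t - s) = E t * E (-s) := by
    intro t s
    have hc : Commute (t • Q) ((-s) • Q) := ((Commute.refl Q).smul_right t).smul_left (-s) |>.symm
    calc E (t - s) = exp (t • Q + (-s) • Q) := by
          rw [hEdef]; congr 1; rw [← add_smul]; ring_nf
      _ = E t * E (-s) := exp_add_of_commute hc
  have hEinv : ∀ t : ℝ, ∀ v : X, E t (E (-t) v) = v := by
    intro t v
    have h1 : E t * E (-t) = (1 : X →L[ℝ] X) := by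
      rw [← hmul t t, sub_self]
      simp [hEdef, exp_zero]
    calc E t (E (-t) v) = (E t * E (-t)) v := rfl
      _ = v := by rw [h1]; rfl
  have hEcont : Continuous E := exp_continuous.comp (continuous_id.smul continuous_const)
  -- the auxiliary integrand
  set h : ℝ → X := fun s => E (-s) (g s) with hhdef
  have hhcont : ContinuousOn h (Set.Ici 0) :=
    ((hEcont.comp continuous_neg).continuousOn).clm_apply hg_cont
  set F : ℝ → X := fun t => ∫ s in (0:ℝ)..t, h s with hFdef
  set C : X := ∫ s in Set.Ici (0:ℝ), g s with hCdef
  -- clean representation of w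
  have hrepr : ∀ t : ℝ, 0 ≤ t → w t = E t (w₀ + F t) - P (w₀ + C) := by
    intro t ht
    have hsub : Set.uIcc (0:ℝ) t ⊆ Set.Ici 0 := by
      rw [Set.uIcc_of_le ht]
      exact fun x hx => hx.1
    have hEt : ContinuousOn (fun s => E (t - s) (g s)) (Set.uIcc (0:ℝ) t) :=
      ((hEcont.comp (continuous_const.sub continuous_id)).continuousOn).clm_apply
        (hg_cont.mono hsub)
    have h1 : IntervalIntegrable (fun s => E (t - s) (g s)) volume 0 t :=
      hEt.intervalIntegrable
    have h2 : IntervalIntegrable (fun s => P (g s)) volume 0 t :=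
      ((P.continuous.comp_continuousOn (hg_cont.mono hsub))).intervalIntegrable
    have h3 : IntervalIntegrable h volume 0 t := (hhcont.mono hsub).intervalIntegrable
    have hgt : IntervalIntegrable g volume 0 t := (hg_cont.mono hsub).intervalIntegrable
    have split : (∫ s in (0:ℝ)..t, (exp ((t - s) • Q) - P) (g s))
        = (∫ s in (0:ℝ)..t, E (t - s) (g s)) - ∫ s in (0:ℝ)..t, P (g s) := by
      rw [← intervalIntegral.integral_sub h1 h2]
      rfl
    have conv : (∫ s in (0:ℝ)..t, E (t - s) (g s)) = E t (F t) := by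
      have heq : ∀ s : ℝ, E (t - s) (g s) = E t (h s) := by
        intro s
        rw [hmul t s]; rfl
      simp_rw [heq]
      exact ContinuousLinearMap.intervalIntegral_comp_comm (E t) h3
    have tail : (∫ s in Set.Ici t, g s) = C - ∫ s in (0:ℝ)..t, g s := by
      have h0 : (∫ s in Set.Ici (0:ℝ), g s) = ∫ s in Set.Ioi (0:ℝ), g s :=
        integral_Ici_eq_integral_Ioi
      have ht' : (∫ s in Set.Ici t, g s) = ∫ s in Set.Ioi t, g s :=
        integral_Ici_eq_integral_Ioi
      have hsplit : (∫ s in Set.Ioi (0:ℝ), g s)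
          = (∫ s in Set.Ioc 0 t, g s) + ∫ s in Set.Ioi t, g s := by
        rw [← setIntegral_union (Set.Ioc_disjoint_Ioi le_rfl) measurableSet_Ioi
          (hg_int.mono_set (fun x hx => le_of_lt hx.1))
          (hg_int.mono_set (fun x hx => le_of_lt (lt_of_le_of_lt ht hx))),
          Set.Ioc_union_Ioi_eq_Ioi ht]
      rw [intervalIntegral.integral_of_le ht, ht', hCdef, h0, hsplit]
      abel
    have hPint : P (∫ s in (0:ℝ)..t, g s) = ∫ s in (0:ℝ)..t, P (g s) :=
      (ContinuousLinearMap.intervalIntegral_comp_comm P hgt).symm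
    rw [hw t, split, conv, tail, map_sub, hPint, map_add, map_add]
    simp only [ContinuousLinearMap.sub_apply]
    abel
  -- differentiate
  have hFderiv : HasDerivAt F (h τ) τ := by
    have hsub : Set.uIcc (0:ℝ) τ ⊆ Set.Ici 0 := by
      rw [Set.uIcc_of_le hτ.le]; exact fun x hx => hx.1
    have hint : IntervalIntegrable h volume 0 τ := (hhcont.mono hsub).intervalIntegrable
    have hmeas : StronglyMeasurableAtFilter h (nhds τ) volume :=
      (hhcont.mono (Set.Ioi_subset_Ici le_rfl)).stronglyMeasurableAtFilter isOpen_Ioi τ hτ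
    have hca : ContinuousAt h τ := hhcont.continuousAt (Ici_mem_nhds hτ)
    exact intervalIntegral.integral_hasDerivAt_right hint hmeas hca
  have hEderiv : HasDerivAt E (Q * E τ) τ := hasDerivAt_exp_smul_const' Q τ
  have hu : HasDerivAt (fun t => w₀ + F t) (h τ) τ := hFderiv.const_add w₀
  have hmain : HasDerivAt (fun t => E t (w₀ + F t) - P (w₀ + C))
      ((Q * E τ) (w₀ + F τ) + E τ (h τ)) τ := by
    simpa using (hEderiv.clm_apply hu).sub_const (P (w₀ + C))
  have hEq : w =ᶠ[nhds τ] fun t => E t (w₀ + F t) - P (w₀ + C) := by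
    filter_upwards [Ioi_mem_nhds hτ] with t ht
    exact hrepr t (le_of_lt ht)
  have hQP0 : ∀ x : X, Q (P x) = 0 := by
    intro x
    have := congrArg (fun (A : X →L[ℝ] X) => A x) hQP
    simpa using this
  have hval : (Q * E τ) (w₀ + F τ) + E τ (h τ) = Q (w τ) + g τ := by
    rw [hrepr τ hτ.le, map_sub, hQP0, sub_zero]
    congr 1
    exact hEinv τ (g τ)
  rw [← hval]
  exact HasDerivAt.congr_of_eventuallyEq hmain hEq
end

section
/- Let X be a real Banach space and let Q, Π : X →L X be bounded linear operators with Π ∘ Π = Π, Π ∘ Q = Q ∘ Π = 0, and suppose Q is uniformly exponentially ergodic with projector Π (‖e^{tQ} − Π‖ ≤ C·e^{−a t} for all t ≥ 0, with C ≥ 0, a > 0). Let g : [0,∞) → X be continuous with ‖g(·)‖ integrable on [0,∞), and let w₀ ∈ X. Then the corrected singular term w(τ) := (e^{τQ} − Π) w₀ + ∫₀^τ (e^{(τ−s)Q} − Π) g(s) ds − Π ( ∫_τ^∞ g(s) ds ) tends to 0 in norm as τ → ∞. -/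
open NormedSpace MeasureTheory Filter

set_option maxHeartbeats 1000000
set_option synthInstance.maxHeartbeats 400000

/-- Under uniform exponential ergodicity, the corrected singular term
`w(τ) = (e^{τQ} − P) w₀ + ∫₀^τ (e^{(τ−s)Q} − P) g(s) ds − P(∫_τ^∞ g(s) ds)`
tends to `0` in norm as `τ → ∞`. -/
theorem singular_term_tendsto_zero
    {X : Type*} [NormedAddCommGroup X] [NormedSpace ℝ X] [CompleteSpace X]
    (Q P : X →L[ℝ] X)
    (hPP : P ∘L P = P) (hPQ : P ∘L Q = 0) (hQP : Q ∘L P = 0)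
    (C a : ℝ) (hC : 0 ≤ C) (ha : 0 < a)
    (herg : ∀ t : ℝ, 0 ≤ t → ‖exp (t • Q) - P‖ ≤ C * Real.exp (-a * t))
    (g : ℝ → X) (hg_cont : ContinuousOn g (Set.Ici 0))
    (hg_int : IntegrableOn g (Set.Ici 0) volume)
    (w₀ : X) (w : ℝ → X)
    (hw : ∀ τ : ℝ, w τ = (exp (τ • Q) - P) w₀
        + (∫ s in (0:ℝ)..τ, (exp ((τ - s) • Q) - P) (g s))
        - P (∫ s in Set.Ici τ, g s)) :
    Tendsto w atTop (nhds 0) := by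
  have hgn : IntegrableOn (fun s => ‖g s‖) (Set.Ici 0) volume := hg_int.norm
  set N : ℝ → ℝ := fun τ => ∫ s in Set.Ici τ, ‖g s‖ with hNdef
  have hNnonneg : ∀ τ, 0 ≤ N τ := fun τ => integral_nonneg fun s => norm_nonneg _
  -- tail of the norm integral tends to zero
  have hNt : Tendsto N atTop (nhds 0) := by
    have h1 : Tendsto (fun τ => ∫ s in (0:ℝ)..τ, ‖g s‖) atTop
        (nhds (∫ s in Set.Ioi (0:ℝ), ‖g s‖)) :=
      intervalIntegral_tendsto_integral_Ioi 0
        (hgn.mono_set Set.Ioi_subset_Ici_self) tendsto_id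
    have h2 : ∀ᶠ τ in atTop,
        (∫ s in Set.Ioi (0:ℝ), ‖g s‖) - (∫ s in (0:ℝ)..τ, ‖g s‖) = N τ := by
      filter_upwards [eventually_ge_atTop (0:ℝ)] with τ hτ
      have hsub1 : Set.Ioc (0:ℝ) τ ⊆ Set.Ici 0 := fun x hx => le_of_lt hx.1
      have hsub2 : Set.Ioi τ ⊆ Set.Ici (0:ℝ) := fun x hx => le_trans hτ (le_of_lt hx)
      have hsplit : (∫ s in Set.Ioi (0:ℝ), ‖g s‖)
          = (∫ s in Set.Ioc (0:ℝ) τ, ‖g s‖) + ∫ s in Set.Ioi τ, ‖g s‖ := by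
        rw [← setIntegral_union (Set.Ioc_disjoint_Ioi le_rfl) measurableSet_Ioi
          (hgn.mono_set hsub1) (hgn.mono_set hsub2), Set.Ioc_union_Ioi_eq_Ioi hτ]
      have hIci : (∫ s in Set.Ici τ, ‖g s‖) = ∫ s in Set.Ioi τ, ‖g s‖ :=
        integral_Ici_eq_integral_Ioi
      rw [intervalIntegral.integral_of_le hτ, hsplit, hNdef]
      simp [hIci]
    have h3 : Tendsto (fun τ => (∫ s in Set.Ioi (0:ℝ), ‖g s‖) - ∫ s in (0:ℝ)..τ, ‖g s‖)
        atTop (nhds 0) := by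
      simpa using h1.const_sub (∫ s in Set.Ioi (0:ℝ), ‖g s‖)
    exact h3.congr' h2
  -- the bounding function
  set B : ℝ → ℝ := fun τ => C * Real.exp (-a * τ) * ‖w₀‖
      + (C * Real.exp (-a * (τ / 2)) * N 0 + C * N (τ / 2)) + ‖P‖ * N τ with hBdef
  have hBt : Tendsto B atTop (nhds 0) := by
    have half : Tendsto (fun τ : ℝ => τ / 2) atTop atTop :=
      tendsto_id.atTop_div_const two_pos
    have e1 : Tendsto (fun τ => Real.exp (-a * τ)) atTop (nhds 0) :=
      (Real.tendsto_exp_atBot.comp (tendsto_neg_atTop_atBot.comp (tendsto_id.const_mul_atTop ha))).congr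
        (fun τ => by simp [Function.comp, neg_mul])
    have e2 : Tendsto (fun τ => Real.exp (-a * (τ / 2))) atTop (nhds 0) :=
      (Real.tendsto_exp_atBot.comp (tendsto_neg_atTop_atBot.comp (half.const_mul_atTop ha))).congr
        (fun τ => by simp [Function.comp, neg_mul])
    have e3 : Tendsto (fun τ => N (τ / 2)) atTop (nhds 0) := hNt.comp half
    have h4 := (((e1.const_mul C).mul_const ‖w₀‖).add
        (((e2.const_mul C).mul_const (N 0)).add (e3.const_mul C))).add
        (hNt.const_mul ‖P‖)
    rw [hBdef]
    simpa using h4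
  -- the eventual bound
  have hbound : ∀ᶠ τ in atTop, ‖w τ‖ ≤ B τ := by
    filter_upwards [eventually_ge_atTop (0:ℝ)] with τ hτ
    have hhalf0 : (0:ℝ) ≤ τ / 2 := by positivity
    have hhalfτ : τ / 2 ≤ τ := by linarith
    set A : ℝ → X := fun s => (exp ((τ - s) • Q) - P) (g s) with hAdef
    -- measurability of the integrand
    have hcontE : Continuous fun s : ℝ => exp ((τ - s) • Q) - P :=
      ((continuous_iff_continuousAt.2 fun x => (exp_analytic (𝕂 := ℝ) x).continuousAt).comp ((continuous_const.sub continuous_id).smul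
        continuous_const)).sub continuous_const
    have hsubτ : Set.Ioc (0:ℝ) τ ⊆ Set.Ici 0 := fun x hx => le_of_lt hx.1
    have hgm : AEStronglyMeasurable g (volume.restrict (Set.Ioc (0:ℝ) τ)) :=
      hg_int.aestronglyMeasurable.mono_measure (Measure.restrict_mono hsubτ le_rfl)
    have hAm : AEStronglyMeasurable A (volume.restrict (Set.Ioc (0:ℝ) τ)) :=
      (ContinuousLinearMap.id ℝ (X →L[ℝ] X)).aestronglyMeasurable_comp₂
        hcontE.aestronglyMeasurable hgm
    -- integrability of the integrand
    have hAint : IntegrableOn A (Set.Ioc (0:ℝ) τ) volume := by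
      apply Integrable.mono' ((hgn.mono_set hsubτ).const_mul C) hAm
      filter_upwards [ae_restrict_mem measurableSet_Ioc] with s hs
      have hts : 0 ≤ τ - s := sub_nonneg.2 hs.2
      have hexp1 : Real.exp (-a * (τ - s)) ≤ 1 := by
        rw [Real.exp_le_one_iff]
        nlinarith [mul_nonneg ha.le hts]
      calc ‖A s‖ ≤ ‖exp ((τ - s) • Q) - P‖ * ‖g s‖ :=
            ContinuousLinearMap.le_opNorm _ _
        _ ≤ (C * Real.exp (-a * (τ - s))) * ‖g s‖ :=
            mul_le_mul_of_nonneg_right (herg _ hts) (norm_nonneg _)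
        _ ≤ C * ‖g s‖ :=
            mul_le_mul_of_nonneg_right (mul_le_of_le_one_right hC hexp1) (norm_nonneg _)
    -- split the interval integral
    have hunion : Set.Ioc (0:ℝ) (τ / 2) ∪ Set.Ioc (τ / 2) τ = Set.Ioc 0 τ :=
      Set.Ioc_union_Ioc_eq_Ioc hhalf0 hhalfτ
    have heq : (∫ s in (0:ℝ)..τ, A s)
        = (∫ s in Set.Ioc (0:ℝ) (τ / 2), A s) + ∫ s in Set.Ioc (τ / 2) τ, A s := by
      rw [intervalIntegral.integral_of_le hτ, ← hunion,
        setIntegral_union (Set.Ioc_disjoint_Ioc_of_le le_rfl) measurableSet_Ioc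
          (hAint.mono_set (hunion ▸ Set.subset_union_left))
          (hAint.mono_set (hunion ▸ Set.subset_union_right))]
    -- bound the first piece
    have hsub1 : Set.Ioc (0:ℝ) (τ / 2) ⊆ Set.Ici 0 := fun x hx => le_of_lt hx.1
    have b1 : ‖∫ s in Set.Ioc (0:ℝ) (τ / 2), A s‖ ≤ C * Real.exp (-a * (τ / 2)) * N 0 := by
      calc ‖∫ s in Set.Ioc (0:ℝ) (τ / 2), A s‖
          ≤ ∫ s in Set.Ioc (0:ℝ) (τ / 2), C * Real.exp (-a * (τ / 2)) * ‖g s‖ := by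
            apply norm_integral_le_of_norm_le ((hgn.mono_set hsub1).const_mul _)
            filter_upwards [ae_restrict_mem measurableSet_Ioc] with s hs
            have hts : 0 ≤ τ - s := by
              have := hs.2; linarith
            have hmon : Real.exp (-a * (τ - s)) ≤ Real.exp (-a * (τ / 2)) := by
              apply Real.exp_le_exp.2
              have h5 : a * (τ / 2) ≤ a * (τ - s) :=
                mul_le_mul_of_nonneg_left (by linarith [hs.2]) ha.le
              linarith
            calc ‖A s‖ ≤ ‖exp ((τ - s) • Q) - P‖ * ‖g s‖ :=
                  ContinuousLinearMap.le_opNorm _ _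
              _ ≤ (C * Real.exp (-a * (τ - s))) * ‖g s‖ :=
                  mul_le_mul_of_nonneg_right (herg _ hts) (norm_nonneg _)
              _ ≤ C * Real.exp (-a * (τ / 2)) * ‖g s‖ :=
                  mul_le_mul_of_nonneg_right
                    (mul_le_mul_of_nonneg_left hmon hC) (norm_nonneg _)
        _ = C * Real.exp (-a * (τ / 2)) * ∫ s in Set.Ioc (0:ℝ) (τ / 2), ‖g s‖ := by
            rw [integral_const_mul]
        _ ≤ C * Real.exp (-a * (τ / 2)) * N 0 := by
            apply mul_le_mul_of_nonneg_left _ (by positivity)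
            exact setIntegral_mono_set hgn
              (Filter.Eventually.of_forall fun s => norm_nonneg _)
              (HasSubset.Subset.eventuallyLE hsub1)
    -- bound the second piece
    have hsub2 : Set.Ioc (τ / 2) τ ⊆ Set.Ici (τ / 2) := fun x hx => le_of_lt hx.1
    have b2 : ‖∫ s in Set.Ioc (τ / 2) τ, A s‖ ≤ C * N (τ / 2) := by
      calc ‖∫ s in Set.Ioc (τ / 2) τ, A s‖
          ≤ ∫ s in Set.Ioc (τ / 2) τ, C * ‖g s‖ := by
            apply norm_integral_le_of_norm_le
              ((hgn.mono_set (fun x hx => le_trans hhalf0 (le_of_lt hx.1))).const_mul C)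
            filter_upwards [ae_restrict_mem measurableSet_Ioc] with s hs
            have hts : 0 ≤ τ - s := sub_nonneg.2 hs.2
            have hexp1 : Real.exp (-a * (τ - s)) ≤ 1 := by
              rw [Real.exp_le_one_iff]
              nlinarith [mul_nonneg ha.le hts]
            calc ‖A s‖ ≤ ‖exp ((τ - s) • Q) - P‖ * ‖g s‖ :=
                  ContinuousLinearMap.le_opNorm _ _
              _ ≤ (C * Real.exp (-a * (τ - s))) * ‖g s‖ :=
                  mul_le_mul_of_nonneg_right (herg _ hts) (norm_nonneg _)
              _ ≤ C * ‖g s‖ :=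
                  mul_le_mul_of_nonneg_right
                    (mul_le_of_le_one_right hC hexp1) (norm_nonneg _)
        _ = C * ∫ s in Set.Ioc (τ / 2) τ, ‖g s‖ := by rw [integral_const_mul]
        _ ≤ C * N (τ / 2) := by
            apply mul_le_mul_of_nonneg_left _ hC
            exact setIntegral_mono_set
              (hgn.mono_set (Set.Ici_subset_Ici.2 hhalf0))
              (Filter.Eventually.of_forall fun s => norm_nonneg _)
              (HasSubset.Subset.eventuallyLE hsub2)
    -- bound the first and third terms
    have b0 : ‖(exp (τ • Q) - P) w₀‖ ≤ C * Real.exp (-a * τ) * ‖w₀‖ :=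
      le_trans (ContinuousLinearMap.le_opNorm _ _)
        (mul_le_mul_of_nonneg_right (herg τ hτ) (norm_nonneg _))
    have b3 : ‖P (∫ s in Set.Ici τ, g s)‖ ≤ ‖P‖ * N τ :=
      le_trans (ContinuousLinearMap.le_opNorm _ _)
        (mul_le_mul_of_nonneg_left (norm_integral_le_integral_norm _) (norm_nonneg _))
    -- combine
    rw [hw τ]
    calc ‖(exp (τ • Q) - P) w₀ + (∫ s in (0:ℝ)..τ, A s) - P (∫ s in Set.Ici τ, g s)‖
        ≤ ‖(exp (τ • Q) - P) w₀ + (∫ s in (0:ℝ)..τ, A s)‖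
            + ‖P (∫ s in Set.Ici τ, g s)‖ := norm_sub_le _ _
      _ ≤ ‖(exp (τ • Q) - P) w₀‖ + ‖(∫ s in (0:ℝ)..τ, A s)‖
            + ‖P (∫ s in Set.Ici τ, g s)‖ := by
          have := norm_add_le ((exp (τ • Q) - P) w₀) (∫ s in (0:ℝ)..τ, A s)
          linarith
      _ ≤ B τ := by
          rw [heq, hBdef]
          have hn := norm_add_le (∫ s in Set.Ioc (0:ℝ) (τ / 2), A s)
            (∫ s in Set.Ioc (τ / 2) τ, A s)
          simp only
          linarith
  exact squeeze_zero_norm' hbound hBt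
end
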